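/- Suppose ∫_0^∞ Σ_{k=1}^m |a_k(s)| ds < ∞, where a_k are measurable essentially bounded functions and h_k(t) ≤ t are measurable delays. Then every solution of x'(t) + Σ_{k=1}^m a_k(t) x(h_k(t)) = 0 with bounded Borel measurable initial function φ on (-∞, t₀) and initial value x(t₀) = x₀ is bounded on [t₀, ∞); specifically, |x(t)| ≤ exp(∫_{t₀}^∞ Σ_k |a_k(s)| ds) · (|x₀| + ‖φ‖_∞ · ∫_{t₀}^∞ Σ_k |a_k(s)| ds). -/

import Mathlib

open MeasureTheory Real Set Filter Finset

lemma gronwall_core {t₀ T B : ℝ} {g u : ℝ → ℝ} (hT : t₀ ≤ T)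
    (hg0 : ∀ s, 0 ≤ g s) (hgmeas : Measurable g)
    (hgint : IntegrableOn g (Set.Icc t₀ T))
    (hu : Monotone u) (hu0 : ∀ s, 0 ≤ u s) (hB : 0 ≤ B)
    (H : ∀ τ ∈ Set.Icc t₀ T, u τ ≤ B + ∫ s in t₀..τ, g s * u s) :
    u T ≤ B * Real.exp (∫ s in t₀..T, g s) := by
  have hgii : ∀ a b, a ∈ Set.Icc t₀ T → b ∈ Set.Icc t₀ T → IntervalIntegrable g volume a b :=
    fun a b ha hb => (hgint.mono_set (Set.uIcc_subset_Icc ha hb)).intervalIntegrable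
  have hguint : IntegrableOn (fun s => g s * u s) (Set.Icc t₀ T) := by
    refine (hgint.mul_const (u T)).mono' ((hgmeas.mul hu.measurable).aestronglyMeasurable) ?_
    rw [ae_restrict_iff' measurableSet_Icc]
    refine ae_of_all _ fun s hs => ?_
    have : 0 ≤ g s * u s := mul_nonneg (hg0 s) (hu0 s)
    rw [Real.norm_eq_abs, abs_of_nonneg this]
    exact mul_le_mul_of_nonneg_left (hu hs.2) (hg0 s)
  have hguii : ∀ a b, a ∈ Set.Icc t₀ T → b ∈ Set.Icc t₀ T →
      IntervalIntegrable (fun s => g s * u s) volume a b :=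
    fun a b ha hb => (hguint.mono_set (Set.uIcc_subset_Icc ha hb)).intervalIntegrable
  set G : ℝ → ℝ := fun τ => ∫ s in t₀..τ, g s with hGdef
  have hG0 : G t₀ = 0 := intervalIntegral.integral_same
  have hGdiff : ∀ a b, a ∈ Set.Icc t₀ T → b ∈ Set.Icc t₀ T → a ≤ b →
      G b - G a = ∫ s in a..b, g s := by
    intro a b ha hb hab
    have := intervalIntegral.integral_add_adjacent_intervals
      (hgii t₀ a ⟨le_rfl, hT⟩ ha) (hgii a b ha hb)
    simp only [hGdef]
    linarith [this]
  have hGmono : ∀ a b, a ∈ Set.Icc t₀ T → b ∈ Set.Icc t₀ T → a ≤ b → G a ≤ G b := by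
    intro a b ha hb hab
    have h := hGdiff a b ha hb hab
    have : 0 ≤ ∫ s in a..b, g s :=
      intervalIntegral.integral_nonneg hab (fun s _ => hg0 s)
    linarith
  have hGcont : ContinuousOn G (Set.Icc t₀ T) := by
    have := intervalIntegral.continuousOn_primitive_interval
      (μ := volume) (f := g) (a := t₀) (b := T) (by rwa [Set.uIcc_of_le hT])
    rwa [Set.uIcc_of_le hT] at this
  set V : ℝ → ℝ := fun τ => B + ∫ s in t₀..τ, g s * u s with hVdef
  have hVadd : ∀ a b, a ∈ Set.Icc t₀ T → b ∈ Set.Icc t₀ T → a ≤ b →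
      V b = V a + ∫ s in a..b, g s * u s := by
    intro a b ha hb hab
    have := intervalIntegral.integral_add_adjacent_intervals
      (hguii t₀ a ⟨le_rfl, hT⟩ ha) (hguii a b ha hb)
    simp only [hVdef]
    linarith [this]
  have hseg : ∀ a b, a ∈ Set.Icc t₀ T → b ∈ Set.Icc t₀ T → a ≤ b → ∀ M : ℝ, 0 ≤ M →
      (∀ s ∈ Set.Icc a b, u s ≤ M) → (∫ s in a..b, g s * u s) ≤ M * (G b - G a) := by
    intro a b ha hb hab M hM0 hM
    rw [hGdiff a b ha hb hab]
    calc (∫ s in a..b, g s * u s) ≤ ∫ s in a..b, g s * M := by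
          refine intervalIntegral.integral_mono_on hab (hguii a b ha hb)
            ((hgii a b ha hb).mul_const M) (fun s hs => ?_)
          exact mul_le_mul_of_nonneg_left (hM s hs) (hg0 s)
      _ = M * ∫ s in a..b, g s := by
          rw [intervalIntegral.integral_mul_const]; ring
  have claim : ∀ n : ℕ, ∀ θ : ℝ, θ ∈ Set.Ioo (0:ℝ) 1 → ∀ τ ∈ Set.Icc t₀ T,
      G τ ≤ n * θ → V τ ≤ B / (1-θ)^n := by
    intro n
    induction n with
    | zero =>
      intro θ hθ τ hτ hGτ
      have h1 : (∫ s in t₀..τ, g s * u s) ≤ u T * (G τ - G t₀) :=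
        hseg t₀ τ ⟨le_rfl, hT⟩ hτ hτ.1 (u T) (hu0 T) (fun s hs => hu (hs.2.trans hτ.2))
      have h2 : G τ ≤ 0 := by simpa using hGτ
      have h3 : u T * (G τ - G t₀) ≤ 0 := by
        rw [hG0]
        exact mul_nonpos_of_nonneg_of_nonpos (hu0 T) (by linarith)
      simp only [hVdef, pow_zero, div_one]
      linarith
    | succ n ih =>
      intro θ hθ τ hτ hGτ
      have h1θ : 0 < 1 - θ := by linarith [hθ.2]
      set S : Set ℝ := Set.Icc t₀ τ ∩ G ⁻¹' (Set.Iic ((n:ℝ) * θ)) with hSdef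
      have hne : t₀ ∈ S := by
        refine ⟨⟨le_rfl, hτ.1⟩, ?_⟩
        simp only [Set.mem_preimage, Set.mem_Iic, hG0]
        exact mul_nonneg (Nat.cast_nonneg n) hθ.1.le
      have hbdd : BddAbove S := ⟨τ, fun σ hσ => hσ.1.2⟩
      have hclosed : IsClosed S := by
        refine (hGcont.mono (Set.Icc_subset_Icc le_rfl hτ.2)).preimage_isClosed_of_isClosed
          isClosed_Icc isClosed_Iic
      set c := sSup S with hcdef
      have hcS : c ∈ S := hclosed.csSup_mem ⟨t₀, hne⟩ hbdd
      obtain ⟨hc1, hc2⟩ := hcS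
      rw [Set.mem_preimage, Set.mem_Iic] at hc2
      have hcT : c ∈ Set.Icc t₀ T := ⟨hc1.1, hc1.2.trans hτ.2⟩
      have key : G τ - G c ≤ θ := by
        by_cases hGc : (n:ℝ) * θ ≤ G c
        · push_cast at hGτ
          linarith
        · push_neg at hGc
          rcases eq_or_lt_of_le hc1.2 with heq | hcτ
          · rw [heq]; linarith [hθ.1]
          · exfalso
            have hsub : Set.Ioc c τ ⊆ Set.Icc t₀ T :=
              fun σ hσ => ⟨hc1.1.trans hσ.1.le, hσ.2.trans hτ.2⟩
            have hcont : ContinuousWithinAt G (Set.Ioc c τ) c :=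
              (hGcont c hcT).mono hsub
            have hnb : (nhdsWithin c (Set.Ioc c τ)).NeBot := by
              rw [← mem_closure_iff_nhdsWithin_neBot, closure_Ioc hcτ.ne]
              exact ⟨le_rfl, hcτ.le⟩
            have hev : ∀ᶠ σ in nhdsWithin c (Set.Ioc c τ), G σ < (n:ℝ) * θ :=
              hcont (Iio_mem_nhds hGc)
            obtain ⟨σ, hσG, hσmem⟩ := (hev.and self_mem_nhdsWithin).exists
            have hσS : σ ∈ S :=
              ⟨⟨hc1.1.trans hσmem.1.le, hσmem.2⟩, le_of_lt hσG⟩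
            have := le_csSup hbdd hσS
            linarith [hσmem.1]
      have hVc : V c ≤ B / (1-θ)^n := ih θ hθ c hcT hc2
      set D := B / (1-θ)^n with hDdef
      have hD0 : 0 ≤ D := div_nonneg hB (by positivity)
      have husig : ∀ σ ∈ Set.Icc c τ, u σ ≤ D / (1-θ) := by
        intro σ hσ
        have hσT : σ ∈ Set.Icc t₀ T := ⟨hc1.1.trans hσ.1, hσ.2.trans hτ.2⟩
        have h1 : u σ ≤ V σ := H σ hσT
        have h2 : V σ = V c + ∫ s in c..σ, g s * u s := hVadd c σ hcT hσT hσ.1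
        have h3 : (∫ s in c..σ, g s * u s) ≤ u σ * (G σ - G c) :=
          hseg c σ hcT hσT hσ.1 (u σ) (hu0 σ) (fun r hr => hu hr.2)
        have h4 : G σ - G c ≤ θ := by
          have := hGmono σ τ hσT hτ hσ.2
          linarith
        have h5 : u σ * (G σ - G c) ≤ u σ * θ :=
          mul_le_mul_of_nonneg_left h4 (hu0 σ)
        have h6 : u σ * (1 - θ) ≤ V c := by nlinarith
        have h7 : u σ ≤ V c / (1-θ) := by
          rw [le_div_iff₀ h1θ]; linarith
        calc u σ ≤ V c / (1-θ) := h7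
          _ ≤ D / (1-θ) := by gcongr
      have h5 : (∫ s in c..τ, g s * u s) ≤ (D/(1-θ)) * (G τ - G c) :=
        hseg c τ hcT hτ hc1.2 (D/(1-θ)) (div_nonneg hD0 h1θ.le) husig
      have h6 : V τ = V c + ∫ s in c..τ, g s * u s := hVadd c τ hcT hτ hc1.2
      have h7 : (D/(1-θ)) * (G τ - G c) ≤ (D/(1-θ)) * θ :=
        mul_le_mul_of_nonneg_left key (div_nonneg hD0 h1θ.le)
      have h8 : D + (D/(1-θ))*θ = B/(1-θ)^(n+1) := by
        rw [hDdef, pow_succ]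
        field_simp
        ring
      calc V τ = V c + ∫ s in c..τ, g s * u s := h6
        _ ≤ D + (D/(1-θ))*θ := add_le_add hVc (h5.trans h7)
        _ = B/(1-θ)^(n+1) := h8
  -- limit argument
  have hKnn : 0 ≤ G T := by
    have := hGmono t₀ T ⟨le_rfl, hT⟩ ⟨hT, le_rfl⟩ hT
    linarith [hG0]
  have hbound : ∀ θ ∈ Set.Ioo (0:ℝ) 1,
      u T ≤ B * Real.exp (G T * ((-Real.log (1-θ))/θ) + (-Real.log (1-θ))) := by
    intro θ hθ
    have h1θ : 0 < 1 - θ := by linarith [hθ.2]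
    set n := ⌈G T / θ⌉₊ with hndef
    have hn : G T ≤ (n:ℝ) * θ := by
      have h := Nat.le_ceil (G T / θ)
      calc G T = G T / θ * θ := (div_mul_cancel₀ _ (ne_of_gt hθ.1)).symm
        _ ≤ (n:ℝ) * θ := mul_le_mul_of_nonneg_right h hθ.1.le
    have h2 : u T ≤ B/(1-θ)^n :=
      (H T ⟨hT, le_rfl⟩).trans (claim n θ hθ T ⟨hT, le_rfl⟩ hn)
    have hL0 : 0 ≤ -Real.log (1-θ) := by
      rw [neg_nonneg]
      exact Real.log_nonpos (by linarith [hθ.1, hθ.2]) (by linarith [hθ.1, hθ.2])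
    have h3 : B/(1-θ)^n = B * Real.exp ((n:ℝ) * (-Real.log (1-θ))) := by
      have he : Real.exp (-Real.log (1-θ)) = (1-θ)⁻¹ := by
        rw [Real.exp_neg, Real.exp_log h1θ]
      rw [Real.exp_nat_mul, he, inv_pow, div_eq_mul_inv]
    have h4 : (n:ℝ) ≤ G T / θ + 1 :=
      (Nat.ceil_lt_add_one (div_nonneg hKnn hθ.1.le)).le
    have h5 : (n:ℝ) * (-Real.log (1-θ)) ≤ (G T / θ + 1) * (-Real.log (1-θ)) :=
      mul_le_mul_of_nonneg_right h4 hL0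
    have h6 : (G T / θ + 1) * (-Real.log (1-θ))
        = G T * ((-Real.log (1-θ))/θ) + (-Real.log (1-θ)) := by ring
    calc u T ≤ B/(1-θ)^n := h2
      _ = B * Real.exp ((n:ℝ) * (-Real.log (1-θ))) := h3
      _ ≤ B * Real.exp (G T * ((-Real.log (1-θ))/θ) + (-Real.log (1-θ))) := by
          rw [← h6]
          exact mul_le_mul_of_nonneg_left (Real.exp_le_exp.mpr h5) hB
  have hslope : Tendsto (fun θ : ℝ => (-Real.log (1-θ))/θ) (nhdsWithin 0 (Set.Ioi 0)) (nhds 1) := by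
    have h1 : HasDerivAt (fun θ : ℝ => (1:ℝ) - θ) (-1) 0 := by
      simpa using (hasDerivAt_id (0:ℝ)).const_sub (1:ℝ)
    have h2 : HasDerivAt (fun θ : ℝ => Real.log (1-θ)) (((1:ℝ)-0)⁻¹ * (-1)) 0 :=
      (Real.hasDerivAt_log (by norm_num)).comp 0 h1
    have h3 : HasDerivAt (fun θ : ℝ => -Real.log (1-θ)) 1 0 := by
      have := h2.neg
      norm_num at this
      exact this
    have h4 := hasDerivAt_iff_tendsto_slope.mp h3
    have h5 : Tendsto (slope (fun θ : ℝ => -Real.log (1-θ)) 0)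
        (nhdsWithin 0 (Set.Ioi 0)) (nhds 1) :=
      h4.mono_left (nhdsWithin_mono _ (fun y hy => Set.mem_compl_singleton_iff.mpr (ne_of_gt hy)))
    refine h5.congr' ?_
    filter_upwards [self_mem_nhdsWithin] with θ hθ
    rw [slope_def_field]
    norm_num
  have hlog : Tendsto (fun θ : ℝ => -Real.log (1-θ)) (nhdsWithin 0 (Set.Ioi 0)) (nhds 0) := by
    have h1 : ContinuousAt (fun θ : ℝ => -Real.log (1-θ)) 0 := by
      have : ContinuousAt Real.log ((fun θ : ℝ => 1 - θ) 0) := by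
        apply Real.continuousAt_log; norm_num
      exact (this.comp ((continuous_const.sub continuous_id).continuousAt)).neg
    have h2 := h1.tendsto
    norm_num at h2
    exact h2.mono_left nhdsWithin_le_nhds
  have htend : Tendsto (fun θ : ℝ => B * Real.exp (G T * ((-Real.log (1-θ))/θ) + (-Real.log (1-θ))))
      (nhdsWithin 0 (Set.Ioi 0)) (nhds (B * Real.exp (G T))) := by
    have h1 : Tendsto (fun θ : ℝ => G T * ((-Real.log (1-θ))/θ) + (-Real.log (1-θ)))
        (nhdsWithin 0 (Set.Ioi 0)) (nhds (G T * 1 + 0)) :=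
      (tendsto_const_nhds.mul hslope).add hlog
    rw [mul_one, add_zero] at h1
    exact tendsto_const_nhds.mul (Real.continuous_exp.continuousAt.tendsto.comp h1)
  refine ge_of_tendsto htend ?_
  filter_upwards [Ioo_mem_nhdsGT_of_mem (by norm_num : (0:ℝ) ∈ Set.Ico (0:ℝ) 1)] with θ hθ
  exact hbound θ hθ


theorem stmt5 (m : ℕ) (a : Fin m → ℝ → ℝ) (h : Fin m → ℝ → ℝ)
    (hameas : ∀ k, Measurable (a k)) (habd : ∃ A : ℝ, ∀ k t, |a k t| ≤ A)
    (hh : ∀ k, Measurable (h k)) (hht : ∀ k t, h k t ≤ t)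
    (hint : IntegrableOn (fun s => ∑ k : Fin m, |a k s|) (Set.Ici (0:ℝ)))
    (t₀ : ℝ) (ht₀ : 0 ≤ t₀) (x₀ : ℝ) (φ : ℝ → ℝ) (hφmeas : Measurable φ)
    (C : ℝ) (hC : ∀ t < t₀, |φ t| ≤ C)
    (x : ℝ → ℝ)
    (hxφ : ∀ t < t₀, x t = φ t) (hx₀ : x t₀ = x₀)
    (hxeq : ∀ t ≥ t₀, x t = x₀ - ∫ s in t₀..t, ∑ k : Fin m, a k s * x (h k s)) :
    ∀ t ≥ t₀, |x t| ≤
      Real.exp (∫ s in Set.Ici t₀, ∑ k : Fin m, |a k s|) *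
        (|x₀| + C * ∫ s in Set.Ici t₀, ∑ k : Fin m, |a k s|) := by
  intro T hTt₀
  set g : ℝ → ℝ := fun s => ∑ k : Fin m, |a k s| with hgdef
  have hgmeas : Measurable g := Finset.measurable_sum _ fun k _ => (hameas k).abs
  have hg0 : ∀ s, 0 ≤ g s := fun s => Finset.sum_nonneg fun k _ => abs_nonneg _
  have hC0 : 0 ≤ C := le_trans (abs_nonneg _) (hC (t₀-1) (by linarith))
  have hgIci : IntegrableOn g (Set.Ici t₀) := hint.mono_set (Set.Ici_subset_Ici.mpr ht₀)
  set I : ℝ := ∫ s in Set.Ici t₀, g s with hIdef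
  have hI0 : 0 ≤ I := setIntegral_nonneg measurableSet_Ici (fun s _ => hg0 s)
  have hB0 : 0 ≤ |x₀| + C * I := add_nonneg (abs_nonneg _) (mul_nonneg hC0 hI0)
  have hIbd : ∀ τ, t₀ ≤ τ → (∫ s in t₀..τ, g s) ≤ I := by
    intro τ hτ
    rw [intervalIntegral.integral_of_le hτ]
    have hsub : Set.Ioc t₀ τ ⊆ Set.Ici t₀ := fun s hs => hs.1.le
    exact setIntegral_mono_set hgIci (ae_of_all _ (fun s => hg0 s)) hsub.eventuallyLE
  have hgint_cc : IntegrableOn g (Set.Icc t₀ T) := hgIci.mono_set Set.Icc_subset_Ici_self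
  have hgii : ∀ a' b', a' ∈ Set.Icc t₀ T → b' ∈ Set.Icc t₀ T →
      IntervalIntegrable g volume a' b' :=
    fun a' b' ha hb => (hgint_cc.mono_set (Set.uIcc_subset_Icc ha hb)).intervalIntegrable
  set F : ℝ → ℝ := fun s => ∑ k : Fin m, a k s * x (h k s) with hFdef
  by_cases hFint : IntervalIntegrable F volume t₀ T
  case neg =>
    have hxT : x T = x₀ := by
      rw [hxeq T hTt₀, intervalIntegral.integral_undef hFint, sub_zero]
    rw [hxT]
    have h1 : (1:ℝ) ≤ Real.exp I := Real.one_le_exp hI0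
    nlinarith [abs_nonneg x₀, mul_nonneg hC0 hI0]
  case pos =>
  have hxcont : ContinuousOn x (Set.Icc t₀ T) := by
    have h1 : ContinuousOn (fun τ => ∫ s in t₀..τ, F s) (Set.Icc t₀ T) := by
      have h2 := intervalIntegral.continuousOn_primitive_interval' hFint Set.left_mem_uIcc
      rwa [Set.uIcc_of_le hTt₀] at h2
    refine ContinuousOn.congr (continuousOn_const.sub h1) fun τ hτ => hxeq τ hτ.1
  set cl : ℝ → ℝ := fun r => min (max r t₀) T with hcldef
  have hclmem : ∀ r, cl r ∈ Set.Icc t₀ T :=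
    fun r => ⟨le_min (le_max_right r t₀) hTt₀, min_le_right _ _⟩
  have hclcont : Continuous cl := (continuous_id.max continuous_const).min continuous_const
  set X : ℝ → ℝ := Set.piecewise (Set.Iio t₀) φ (fun r => x (cl r)) with hXdef
  have hXmeas : Measurable X :=
    Measurable.piecewise measurableSet_Iio hφmeas
      ((hxcont.comp_continuous hclcont hclmem).measurable)
  have hXeq : ∀ r, r ≤ T → X r = x r := by
    intro r hr
    by_cases h' : r < t₀
    · simp only [hXdef, Set.piecewise]
      rw [if_pos (show r ∈ Set.Iio t₀ from h'), hxφ r h']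
    · push_neg at h'
      have hcl : cl r = r := by
        rw [hcldef]; simp only [max_eq_left h', min_eq_left hr]
      simp only [hXdef, Set.piecewise]
      rw [if_neg (show ¬ r ∈ Set.Iio t₀ by simpa using h')]
      simp only [hcl]
  set u : ℝ → ℝ := fun τ => sSup ((fun r => |x r|) '' Set.Icc t₀ (min τ T)) with hudef
  have habscont : ContinuousOn (fun r => |x r|) (Set.Icc t₀ T) := hxcont.abs
  have hbdd : ∀ τ, BddAbove ((fun r => |x r|) '' Set.Icc t₀ (min τ T)) := by
    intro τ
    exact IsCompact.bddAbove_image isCompact_Icc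
      (habscont.mono (Set.Icc_subset_Icc le_rfl (min_le_right _ _)))
  have hu0 : ∀ τ, 0 ≤ u τ := by
    intro τ
    by_cases hne : (Set.Icc t₀ (min τ T)).Nonempty
    · obtain ⟨r, hr⟩ := hne
      exact le_trans (abs_nonneg (x r)) (le_csSup (hbdd τ) ⟨r, hr, rfl⟩)
    · rw [Set.not_nonempty_iff_eq_empty] at hne
      rw [hudef]
      simp only [hne, Set.image_empty, Real.sSup_empty, le_refl]
  have humono : Monotone u := by
    intro τ₁ τ₂ hle
    by_cases hne : (Set.Icc t₀ (min τ₁ T)).Nonempty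
    · exact csSup_le_csSup (hbdd τ₂) (hne.image _)
        (Set.image_mono (Set.Icc_subset_Icc le_rfl (min_le_min_right T hle)))
    · rw [Set.not_nonempty_iff_eq_empty] at hne
      have : u τ₁ = 0 := by
        rw [hudef]; simp only [hne, Set.image_empty, Real.sSup_empty]
      rw [this]; exact hu0 τ₂
  have hule : ∀ τ, τ ≤ T → ∀ σ, σ ∈ Set.Icc t₀ τ → |x σ| ≤ u τ := by
    intro τ hτ σ hσ
    exact le_csSup (hbdd τ) ⟨σ, ⟨hσ.1, le_min hσ.2 (hσ.2.trans hτ)⟩, rfl⟩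
  have hXbd : ∀ (k : Fin m) s, s ∈ Set.Icc t₀ T → |X (h k s)| ≤ C + u s := by
    intro k s hs
    by_cases h' : h k s < t₀
    · simp only [hXdef, Set.piecewise]
      rw [if_pos (show h k s ∈ Set.Iio t₀ from h')]
      linarith [hC _ h', hu0 s]
    · push_neg at h'
      rw [hXeq _ ((hht k s).trans hs.2)]
      have := hule s hs.2 (h k s) ⟨h', hht k s⟩
      linarith [hC0]
  have humeas : Measurable u := humono.measurable
  have hM : ∀ s ∈ Set.Icc t₀ T, u s ≤ u T := fun s hs => humono hs.2
  set w : ℝ → ℝ := fun s => ∑ k : Fin m, |a k s| * |X (h k s)| with hwdef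
  have hwmeas : Measurable w :=
    Finset.measurable_sum _ fun k _ => (hameas k).abs.mul (hXmeas.comp (hh k)).abs
  have hw0 : ∀ s, 0 ≤ w s :=
    fun s => Finset.sum_nonneg fun k _ => mul_nonneg (abs_nonneg _) (abs_nonneg _)
  have hwle : ∀ s, s ∈ Set.Icc t₀ T → w s ≤ g s * (C + u s) := by
    intro s hs
    rw [hwdef, hgdef]
    rw [Finset.sum_mul]
    exact Finset.sum_le_sum fun k _ =>
      mul_le_mul_of_nonneg_left (hXbd k s hs) (abs_nonneg _)
  have hguint : IntegrableOn (fun s => g s * u s) (Set.Icc t₀ T) := by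
    refine (hgint_cc.mul_const (u T)).mono' ((hgmeas.mul humeas).aestronglyMeasurable) ?_
    rw [ae_restrict_iff' measurableSet_Icc]
    refine ae_of_all _ fun s hs => ?_
    rw [Real.norm_eq_abs, abs_of_nonneg (mul_nonneg (hg0 s) (hu0 s))]
    exact mul_le_mul_of_nonneg_left (hM s hs) (hg0 s)
  have hguii : ∀ a' b', a' ∈ Set.Icc t₀ T → b' ∈ Set.Icc t₀ T →
      IntervalIntegrable (fun s => g s * u s) volume a' b' :=
    fun a' b' ha hb => (hguint.mono_set (Set.uIcc_subset_Icc ha hb)).intervalIntegrable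
  have hwint : IntegrableOn w (Set.Icc t₀ T) := by
    refine (hgint_cc.mul_const (C + u T)).mono' hwmeas.aestronglyMeasurable ?_
    rw [ae_restrict_iff' measurableSet_Icc]
    refine ae_of_all _ fun s hs => ?_
    rw [Real.norm_eq_abs, abs_of_nonneg (hw0 s)]
    calc w s ≤ g s * (C + u s) := hwle s hs
      _ ≤ g s * (C + u T) :=
        mul_le_mul_of_nonneg_left (by linarith [hM s hs]) (hg0 s)
  have hwii : ∀ a' b', a' ∈ Set.Icc t₀ T → b' ∈ Set.Icc t₀ T →
      IntervalIntegrable w volume a' b' :=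
    fun a' b' ha hb => (hwint.mono_set (Set.uIcc_subset_Icc ha hb)).intervalIntegrable
  have hFle : ∀ s, s ∈ Set.Icc t₀ T → |F s| ≤ w s := by
    intro s hs
    rw [hFdef, hwdef]
    refine (Finset.abs_sum_le_sum_abs _ _).trans (Finset.sum_le_sum fun k _ => ?_)
    rw [abs_mul, hXeq (h k s) ((hht k s).trans hs.2)]
  have hFii : ∀ τ, τ ∈ Set.Icc t₀ T → IntervalIntegrable F volume t₀ τ :=
    fun τ hτ => hFint.mono_set
      (Set.uIcc_subset_uIcc Set.left_mem_uIcc (by rw [Set.uIcc_of_le hTt₀]; exact hτ))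
  have hmain : ∀ τ, τ ∈ Set.Icc t₀ T →
      |x τ| ≤ (|x₀| + C * I) + ∫ s in t₀..τ, g s * u s := by
    intro τ hτ
    have hτT : τ ∈ Set.Icc t₀ T := hτ
    have e1 : x τ = x₀ - ∫ s in t₀..τ, F s := hxeq τ hτ.1
    have e2 : |x τ| ≤ |x₀| + |∫ s in t₀..τ, F s| := by
      rw [e1]; exact (abs_sub _ _)
    have e3 : |∫ s in t₀..τ, F s| ≤ ∫ s in t₀..τ, |F s| :=
      intervalIntegral.abs_integral_le_integral_abs hτ.1
    have e4 : (∫ s in t₀..τ, |F s|) ≤ ∫ s in t₀..τ, w s :=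
      intervalIntegral.integral_mono_on hτ.1 (hFii τ hτ).abs
        (hwii t₀ τ ⟨le_rfl, hTt₀⟩ hτ)
        (fun s hs => hFle s ⟨hs.1, hs.2.trans hτ.2⟩)
    have e5 : (∫ s in t₀..τ, w s) ≤ ∫ s in t₀..τ, (g s * C + g s * u s) := by
      refine intervalIntegral.integral_mono_on hτ.1 (hwii t₀ τ ⟨le_rfl, hTt₀⟩ hτ)
        (((hgii t₀ τ ⟨le_rfl, hTt₀⟩ hτ).mul_const C).add (hguii t₀ τ ⟨le_rfl, hTt₀⟩ hτ))
        (fun s hs => ?_)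
      have := hwle s ⟨hs.1, hs.2.trans hτ.2⟩
      nlinarith [this]
    have e6 : (∫ s in t₀..τ, (g s * C + g s * u s))
        = C * (∫ s in t₀..τ, g s) + ∫ s in t₀..τ, g s * u s := by
      rw [intervalIntegral.integral_add ((hgii t₀ τ ⟨le_rfl, hTt₀⟩ hτ).mul_const C)
        (hguii t₀ τ ⟨le_rfl, hTt₀⟩ hτ), intervalIntegral.integral_mul_const, mul_comm]
    have e7 : C * (∫ s in t₀..τ, g s) ≤ C * I :=
      mul_le_mul_of_nonneg_left (hIbd τ hτ.1) hC0
    linarith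
  have hH : ∀ τ, τ ∈ Set.Icc t₀ T →
      u τ ≤ (|x₀| + C * I) + ∫ s in t₀..τ, g s * u s := by
    intro τ hτ
    rw [hudef]
    refine csSup_le ((Set.nonempty_Icc.mpr (le_min hτ.1 hTt₀)).image _) ?_
    rintro y ⟨σ, hσ, rfl⟩
    have hσ' : σ ∈ Set.Icc t₀ τ := ⟨hσ.1, hσ.2.trans (min_le_left _ _)⟩
    have hσT : σ ∈ Set.Icc t₀ T := ⟨hσ.1, hσ.2.trans (min_le_right _ _)⟩
    have h1 := hmain σ hσT
    have h2 : (∫ s in t₀..σ, g s * u s) ≤ ∫ s in t₀..τ, g s * u s := by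
      have h3 := intervalIntegral.integral_add_adjacent_intervals
        (hguii t₀ σ ⟨le_rfl, hTt₀⟩ hσT) (hguii σ τ hσT hτ)
      have h4 : 0 ≤ ∫ s in σ..τ, g s * u s :=
        intervalIntegral.integral_nonneg hσ'.2 (fun s _ => mul_nonneg (hg0 s) (hu0 s))
      linarith
    linarith
  have hfinal := gronwall_core hTt₀ hg0 hgmeas hgint_cc humono hu0 hB0 hH
  have hxT : |x T| ≤ u T := hule T le_rfl T ⟨hTt₀, le_rfl⟩
  have hexp : Real.exp (∫ s in t₀..T, g s) ≤ Real.exp I :=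
    Real.exp_le_exp.mpr (hIbd T hTt₀)
  calc |x T| ≤ u T := hxT
    _ ≤ (|x₀| + C * I) * Real.exp (∫ s in t₀..T, g s) := hfinal
    _ ≤ (|x₀| + C * I) * Real.exp I := mul_le_mul_of_nonneg_left hexp hB0
    _ = Real.exp I * (|x₀| + C * I) := mul_comm _ _
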